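/- An elementary substructure of a standard model for (Σ, Φ) is itself a standard model for (Σ, Φ). -/

import Mathlib

/-! ### First-order logic with inductively defined predicates (FOL_ID) -/

/-- A first-order signature with ordinary and inductive predicate symbols. -/
structure Signature : Type 1 where
  Func : Type
  arF : Func → ℕ
  Pred : Type
  arP : Pred → ℕ
  IndPred : Type
  arI : IndPred → ℕ

/-- Terms over a signature. -/
inductive Tm (S : Signature) : Type
  | var : ℕ → Tm S
  | func (f : S.Func) : (Fin (S.arF f) → Tm S) → Tm S

/-- Formulas of FOL_ID. -/
inductive Fm (S : Signature) : Type
  | fals : Fm S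
  | eq : Tm S → Tm S → Fm S
  | pred (Q : S.Pred) : (Fin (S.arP Q) → Tm S) → Fm S
  | ind (P : S.IndPred) : (Fin (S.arI P) → Tm S) → Fm S
  | not : Fm S → Fm S
  | and : Fm S → Fm S → Fm S
  | or : Fm S → Fm S → Fm S
  | imp : Fm S → Fm S → Fm S
  | all : ℕ → Fm S → Fm S
  | ex : ℕ → Fm S → Fm S

/-- A first-order structure for a signature. -/
structure Struc (S : Signature) : Type 1 where
  U : Type
  interpF (f : S.Func) : (Fin (S.arF f) → U) → U
  interpP (Q : S.Pred) : Set (Fin (S.arP Q) → U)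
  interpI : Set ((P : S.IndPred) × (Fin (S.arI P) → U))

/-- Evaluation of terms. -/
def Tm.eval {S : Signature} (M : Struc S) (ρ : ℕ → M.U) : Tm S → M.U
  | .var n => ρ n
  | .func f ts => M.interpF f (fun i => (ts i).eval M ρ)

/-- Update of a variable assignment. -/
def update {α : Type} (ρ : ℕ → α) (n : ℕ) (a : α) : ℕ → α :=
  fun m => if m = n then a else ρ m

/-- Tarskian satisfaction. -/
def Sat {S : Signature} (M : Struc S) (ρ : ℕ → M.U) : Fm S → Prop
  | .fals => False
  | .eq t u => t.eval M ρ = u.eval M ρ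
  | .pred Q ts => (fun i => (ts i).eval M ρ) ∈ M.interpP Q
  | .ind P ts => ⟨P, fun i => (ts i).eval M ρ⟩ ∈ M.interpI
  | .not A => ¬ Sat M ρ A
  | .and A B => Sat M ρ A ∧ Sat M ρ B
  | .or A B => Sat M ρ A ∨ Sat M ρ B
  | .imp A B => Sat M ρ A → Sat M ρ B
  | .all n A => ∀ a : M.U, Sat M (update ρ n a) A
  | .ex n A => ∃ a : M.U, Sat M (update ρ n a) A

/-- Free variables of a term. -/
def Tm.fv {S : Signature} : Tm S → Finset ℕ
  | .var n => {n}
  | .func _ ts => Finset.univ.biUnion (fun i => (ts i).fv)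

/-- Free variables of a formula. -/
def Fm.fv {S : Signature} : Fm S → Finset ℕ
  | .fals => ∅
  | .eq t u => t.fv ∪ u.fv
  | .pred _ ts => Finset.univ.biUnion (fun i => (ts i).fv)
  | .ind _ ts => Finset.univ.biUnion (fun i => (ts i).fv)
  | .not A => A.fv
  | .and A B => A.fv ∪ B.fv
  | .or A B => A.fv ∪ B.fv
  | .imp A B => A.fv ∪ B.fv
  | .all n A => A.fv.erase n
  | .ex n A => A.fv.erase n

/-- Simultaneous substitution on terms. -/
def Tm.subst {S : Signature} (σ : ℕ → Tm S) : Tm S → Tm S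
  | .var n => σ n
  | .func f ts => .func f (fun i => (ts i).subst σ)

/-- Substitution of a (closed) term for a variable in a formula. -/
def Fm.substC {S : Signature} (x : ℕ) (t : Tm S) : Fm S → Fm S
  | .fals => .fals
  | .eq a b => .eq (a.subst (fun n => if n = x then t else .var n))
      (b.subst (fun n => if n = x then t else .var n))
  | .pred Q ts => .pred Q (fun i => (ts i).subst (fun n => if n = x then t else .var n))
  | .ind P ts => .ind P (fun i => (ts i).subst (fun n => if n = x then t else .var n))
  | .not A => .not (A.substC x t)
  | .and A B => .and (A.substC x t) (B.substC x t)
  | .or A B => .or (A.substC x t) (B.substC x t)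
  | .imp A B => .imp (A.substC x t) (B.substC x t)
  | .all n A => if n = x then .all n A else .all n (A.substC x t)
  | .ex n A => if n = x then .ex n A else .ex n (A.substC x t)

/-- A production rule for inductive predicates. -/
structure ProdRule (S : Signature) : Type where
  concl : S.IndPred
  conclArgs : Fin (S.arI concl) → Tm S
  ordPrems : List ((Q : S.Pred) × (Fin (S.arP Q) → Tm S))
  indPrems : List ((P : S.IndPred) × (Fin (S.arI P) → Tm S))

/-- The monotone operator determined by a set of production rules over a structure. -/
def step {S : Signature} (M : Struc S) (Φ : List (ProdRule S))
    (X : Set ((P : S.IndPred) × (Fin (S.arI P) → M.U))) :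
    Set ((P : S.IndPred) × (Fin (S.arI P) → M.U)) :=
  { v | ∃ r ∈ Φ, ∃ ρ : ℕ → M.U,
      (∀ q ∈ r.ordPrems, (fun i => (q.2 i).eval M ρ) ∈ M.interpP q.1) ∧
      (∀ p ∈ r.indPrems, ⟨p.1, fun i => (p.2 i).eval M ρ⟩ ∈ X) ∧
      v = ⟨r.concl, fun i => (r.conclArgs i).eval M ρ⟩ }

theorem step_mono {S : Signature} (M : Struc S) (Φ : List (ProdRule S)) :
    Monotone (step M Φ) := by
  rintro X Y h v ⟨r, hr, ρ, hq, hp, hv⟩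
  exact ⟨r, hr, ρ, hq, fun p hp' => h (hp p hp'), hv⟩

/-- The operator for the production rules, as an order homomorphism. -/
def stepHom {S : Signature} (M : Struc S) (Φ : List (ProdRule S)) :
    Set ((P : S.IndPred) × (Fin (S.arI P) → M.U)) →o
      Set ((P : S.IndPred) × (Fin (S.arI P) → M.U)) :=
  ⟨step M Φ, step_mono M Φ⟩

/-- A structure is a standard model for `(S, Φ)` if it interprets the inductive
predicates by the least fixpoint of the operator for `Φ`. -/
def Standard {S : Signature} (M : Struc S) (Φ : List (ProdRule S)) : Prop :=
  M.interpI = OrderHom.lfp (stepHom M Φ)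

/-- The variables occurring in a production rule. -/
def ProdRule.vars {S : Signature} (r : ProdRule S) : Finset ℕ :=
  (Finset.univ.biUnion fun i => (r.conclArgs i).fv) ∪
    (r.ordPrems.foldr (fun q s => s ∪ Finset.univ.biUnion fun i => (q.2 i).fv) ∅) ∪
    (r.indPrems.foldr (fun p s => s ∪ Finset.univ.biUnion fun i => (p.2 i).fv) ∅)

def bigAnd {S : Signature} : List (Fm S) → Fm S
  | [] => .not .fals
  | A :: l => .and A (bigAnd l)

def bigOr {S : Signature} : List (Fm S) → Fm S
  | [] => .fals
  | A :: l => .or A (bigOr l)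

def exList {S : Signature} : List ℕ → Fm S → Fm S
  | [], A => A
  | n :: l, A => .ex n (exList l A)

/-- The `k`-fold syntactic unfolding `P^{(k)}(t⃗)` of an inductive predicate:
`P^{(0)}(t⃗) ≡ ⊥` and `P^{(k+1)}(t⃗)` is the disjunction, over production rules with
conclusion `P t⃗₀`, of `∃y⃗ (t⃗ = t⃗₀ ∧ ⋀ Q_l u⃗_l ∧ ⋀ P_{j_p}^{(k)}(t⃗_p))`, with the
rule variables `y⃗` renamed to be fresh for `t⃗`. -/
def unfold {S : Signature} [DecidableEq S.IndPred] (Φ : List (ProdRule S)) :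
    ℕ → (P : S.IndPred) → (Fin (S.arI P) → Tm S) → Fm S
  | 0, _, _ => .fals
  | (k+1), P, ts =>
    bigOr (Φ.map fun r =>
      if h : r.concl = P then
        let N : ℕ := ((Finset.univ.biUnion fun i => (ts i).fv).sup id) + 1
        let σ : ℕ → Tm S := fun n => .var (n + N)
        exList ((r.vars.sort (· ≤ ·)).map (· + N))
          (.and (bigAnd ((List.finRange (S.arI P)).map fun i =>
              .eq (ts i) (((h ▸ r.conclArgs) i).subst σ)))
            (.and (bigAnd (r.ordPrems.map fun q => .pred q.1 fun i => (q.2 i).subst σ))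
              (bigAnd (r.indPrems.map fun p => unfold Φ k p.1 fun i => (p.2 i).subst σ))))
      else .fals)

/-! ### Auxiliary lemmas -/

theorem Tm.eval_congr {S : Signature} (M : Struc S) {ρ ρ' : ℕ → M.U} :
    ∀ t : Tm S, (∀ n ∈ t.fv, ρ n = ρ' n) → t.eval M ρ = t.eval M ρ'
  | .var n, h => h n (by simp [Tm.fv])
  | .func f ts, h => by
    simp only [Tm.eval]
    congr 1
    funext i
    exact Tm.eval_congr M (ts i) (fun n hn => h n (by
      simp only [Tm.fv, Finset.mem_biUnion]
      exact ⟨i, Finset.mem_univ i, hn⟩))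

theorem Tm.eval_subst {S : Signature} (M : Struc S) (σ : ℕ → Tm S) (ρ : ℕ → M.U) :
    ∀ t : Tm S, (t.subst σ).eval M ρ = t.eval M (fun n => (σ n).eval M ρ)
  | .var n => rfl
  | .func f ts => by
    simp only [Tm.subst, Tm.eval]
    congr 1
    funext i
    exact Tm.eval_subst M σ ρ (ts i)

theorem sat_bigAnd {S : Signature} (M : Struc S) (ρ : ℕ → M.U) :
    ∀ l : List (Fm S), Sat M ρ (bigAnd l) ↔ ∀ A ∈ l, Sat M ρ A
  | [] => by simp [bigAnd, Sat]
  | A :: l => by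
    simp [bigAnd, Sat, sat_bigAnd M ρ l]

theorem sat_bigOr {S : Signature} (M : Struc S) (ρ : ℕ → M.U) :
    ∀ l : List (Fm S), Sat M ρ (bigOr l) ↔ ∃ A ∈ l, Sat M ρ A
  | [] => by simp [bigOr, Sat]
  | A :: l => by
    simp [bigOr, Sat, sat_bigOr M ρ l]

theorem sat_exList {S : Signature} (M : Struc S) (A : Fm S) :
    ∀ (l : List ℕ) (ρ : ℕ → M.U),
      Sat M ρ (exList l A) ↔ ∃ ρ' : ℕ → M.U, (∀ n, n ∉ l → ρ' n = ρ n) ∧ Sat M ρ' A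
  | [], ρ => by
    constructor
    · exact fun h => ⟨ρ, fun n _ => rfl, h⟩
    · rintro ⟨ρ', h1, h2⟩
      have : ρ' = ρ := funext fun n => h1 n (by simp)
      rwa [← this]
  | m :: l, ρ => by
    show (∃ a : M.U, Sat M (update ρ m a) (exList l A)) ↔ _
    constructor
    · rintro ⟨a, ha⟩
      rcases (sat_exList M A l (update ρ m a)).1 ha with ⟨ρ', h1, h2⟩
      refine ⟨ρ', fun n hn => ?_, h2⟩
      have hnm : n ≠ m := fun e => hn (e ▸ (List.mem_cons_self : m ∈ m :: l))
      have hnl : n ∉ l := fun e => hn (List.mem_cons_of_mem _ e)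
      rw [h1 n hnl, update, if_neg hnm]
    · rintro ⟨ρ', h1, h2⟩
      refine ⟨ρ' m, (sat_exList M A l (update ρ m (ρ' m))).2 ⟨ρ', fun n hn => ?_, h2⟩⟩
      by_cases hnm : n = m
      · subst hnm; simp [update]
      · rw [update, if_neg hnm]
        exact h1 n (by simp [hnm, hn])

/-- Free variables of terms in the foldr-unions used in `ProdRule.vars`. -/
theorem mem_foldr_fv {S : Signature} {ι : Type} {ar : ι → ℕ}
    (l : List ((Q : ι) × (Fin (ar Q) → Tm S))) (q : (Q : ι) × (Fin (ar Q) → Tm S))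
    (hq : q ∈ l) (i : Fin (ar q.1)) :
    (q.2 i).fv ⊆ l.foldr (fun q s => s ∪ Finset.univ.biUnion fun i => (q.2 i).fv) ∅ := by
  induction l with
  | nil => cases hq
  | cons a l ih =>
    simp only [List.foldr_cons]
    rcases List.mem_cons.1 hq with h | h
    · subst h
      intro x hx
      simp only [Finset.mem_union, Finset.mem_biUnion]
      exact Or.inr ⟨i, Finset.mem_univ i, hx⟩
    · intro x hx
      simp only [Finset.mem_union]
      exact Or.inl (ih h hx)

theorem conclArgs_fv_subset {S : Signature} (r : ProdRule S) (i : Fin (S.arI r.concl)) :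
    (r.conclArgs i).fv ⊆ r.vars := by
  intro x hx
  unfold ProdRule.vars
  simp only [Finset.mem_union, Finset.mem_biUnion]
  exact Or.inl (Or.inl ⟨i, Finset.mem_univ i, hx⟩)

theorem ordPrems_fv_subset {S : Signature} (r : ProdRule S)
    (q : (Q : S.Pred) × (Fin (S.arP Q) → Tm S)) (hq : q ∈ r.ordPrems) (i : Fin (S.arP q.1)) :
    (q.2 i).fv ⊆ r.vars := by
  intro x hx
  unfold ProdRule.vars
  simp only [Finset.mem_union]
  exact Or.inl (Or.inr (mem_foldr_fv _ q hq i hx))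

theorem indPrems_fv_subset {S : Signature} (r : ProdRule S)
    (p : (P : S.IndPred) × (Fin (S.arI P) → Tm S)) (hp : p ∈ r.indPrems) (i : Fin (S.arI p.1)) :
    (p.2 i).fv ⊆ r.vars := by
  intro x hx
  unfold ProdRule.vars
  simp only [Finset.mem_union]
  exact Or.inr (mem_foldr_fv _ p hp i hx)

/-- Kleene: the least fixed point of the step operator is the union of its finite iterates. -/
theorem lfp_eq_iUnion {S : Signature} (M : Struc S) (Φ : List (ProdRule S)) :
    OrderHom.lfp (stepHom M Φ) = ⋃ k, (step M Φ)^[k] ∅ := by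
  have hmono : ∀ k, (step M Φ)^[k] ∅ ⊆ (step M Φ)^[k+1] ∅ := by
    intro k
    induction k with
    | zero => simp
    | succ k ih =>
      rw [Function.iterate_succ_apply', Function.iterate_succ_apply']
      exact step_mono M Φ ih
  have hchain : ∀ j k, j ≤ k → (step M Φ)^[j] ∅ ⊆ (step M Φ)^[k] ∅ := by
    intro j k hjk
    induction hjk with
    | refl => exact subset_rfl
    | step _ ih => exact ih.trans (hmono _)
  apply le_antisymm
  · apply OrderHom.lfp_le
    intro v hv
    rcases hv with ⟨r, hr, ρ, hq, hp, hv⟩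
    -- each inductive premise lies in some finite iterate; take the max
    have : ∃ K, ∀ p ∈ r.indPrems, (⟨p.1, fun i => (p.2 i).eval M ρ⟩ :
        (P : S.IndPred) × (Fin (S.arI P) → M.U)) ∈ (step M Φ)^[K] ∅ := by
      clear hv
      revert hp
      induction r.indPrems with
      | nil => exact fun _ => ⟨0, by simp⟩
      | cons a l ih =>
        intro hp
        rcases ih (fun p hp' => hp p (List.mem_cons_of_mem _ hp')) with ⟨K, hK⟩
        rcases Set.mem_iUnion.1 (hp a ((List.mem_cons_self : a ∈ a :: l))) with ⟨Ka, hKa⟩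
        refine ⟨max K Ka, fun p hp' => ?_⟩
        rcases List.mem_cons.1 hp' with h | h
        · subst h; exact hchain Ka _ (le_max_right _ _) hKa
        · exact hchain K _ (le_max_left _ _) (hK p h)
    rcases this with ⟨K, hK⟩
    apply Set.mem_iUnion.2 ⟨K + 1, ?_⟩
    rw [Function.iterate_succ_apply']
    exact ⟨r, hr, ρ, hq, hK, hv⟩
  · apply Set.iUnion_subset
    intro k
    induction k with
    | zero => simp
    | succ k ih =>
      rw [Function.iterate_succ_apply']
      calc step M Φ ((step M Φ)^[k] ∅) ⊆ step M Φ (OrderHom.lfp (stepHom M Φ)) :=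
            step_mono M Φ ih
        _ = OrderHom.lfp (stepHom M Φ) := OrderHom.map_lfp (stepHom M Φ)


/-- Satisfaction of the body of one disjunct of the unfolding. -/
theorem sat_body {S : Signature} [DecidableEq S.IndPred] (Φ : List (ProdRule S)) (M : Struc S)
    (k : ℕ)
    (IH : ∀ (P : S.IndPred) (us : Fin (S.arI P) → Tm S) (ρ : ℕ → M.U),
      Sat M ρ (unfold Φ k P us) ↔
        (⟨P, fun i => (us i).eval M ρ⟩ :
          (Q : S.IndPred) × (Fin (S.arI Q) → M.U)) ∈ (step M Φ)^[k] ∅)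
    (r : ProdRule S) (ts : Fin (S.arI r.concl) → Tm S) (ρ : ℕ → M.U) :
    let N : ℕ := ((Finset.univ.biUnion fun i => (ts i).fv).sup id) + 1
    let σ : ℕ → Tm S := fun n => .var (n + N)
    (Sat M ρ (exList ((r.vars.sort (· ≤ ·)).map (· + N))
      (.and (bigAnd ((List.finRange (S.arI r.concl)).map fun i =>
          .eq (ts i) ((r.conclArgs i).subst σ)))
        (.and (bigAnd (r.ordPrems.map fun q => .pred q.1 fun i => (q.2 i).subst σ))
          (bigAnd (r.indPrems.map fun p => unfold Φ k p.1 fun i => (p.2 i).subst σ))))) ↔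
    ∃ τ : ℕ → M.U,
      (∀ q ∈ r.ordPrems, (fun i => (q.2 i).eval M τ) ∈ M.interpP q.1) ∧
      (∀ p ∈ r.indPrems, (⟨p.1, fun i => (p.2 i).eval M τ⟩ :
          (Q : S.IndPred) × (Fin (S.arI Q) → M.U)) ∈ (step M Φ)^[k] ∅) ∧
      (fun i => (ts i).eval M ρ) = fun i => (r.conclArgs i).eval M τ) := by
  intro N σ
  have hLmem : ∀ n, n ∈ (r.vars.sort (· ≤ ·)).map (· + N) ↔ ∃ v ∈ r.vars, v + N = n := by
    intro n
    simp [List.mem_map, Finset.mem_sort]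
  have htsN : ∀ (i : Fin (S.arI r.concl)) n, n ∈ (ts i).fv → n < N := by
    intro i n hn
    have : n ≤ (Finset.univ.biUnion fun i => (ts i).fv).sup id :=
      Finset.le_sup (f := id) (Finset.mem_biUnion.2 ⟨i, Finset.mem_univ i, hn⟩)
    omega
  rw [sat_exList]
  constructor
  · rintro ⟨ρ', hρ', hsat⟩
    obtain ⟨hE, hO, hI⟩ : _ ∧ _ ∧ _ := hsat
    have hsub : ∀ t : Tm S, (t.subst σ).eval M ρ' = t.eval M fun n => ρ' (n + N) :=
      fun t => Tm.eval_subst M σ ρ' t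
    refine ⟨fun n => ρ' (n + N), ?_, ?_, ?_⟩
    · intro q hq
      have hsq := (sat_bigAnd M ρ' _).1 hO _ (List.mem_map.2 ⟨q, hq, rfl⟩)
      have h2 : (fun i => ((q.2 i).subst σ).eval M ρ') =
          fun i => (q.2 i).eval M fun n => ρ' (n + N) := funext fun i => hsub _
      exact h2 ▸ hsq
    · intro p hp
      have hsp := (sat_bigAnd M ρ' _).1 hI _ (List.mem_map.2 ⟨p, hp, rfl⟩)
      have hmem := (IH p.1 _ ρ').1 hsp
      have h2 : (fun i => ((p.2 i).subst σ).eval M ρ') =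
          fun i => (p.2 i).eval M fun n => ρ' (n + N) := funext fun i => hsub _
      rw [← h2]
      exact hmem
    · funext i
      have hEi : (ts i).eval M ρ' = ((r.conclArgs i).subst σ).eval M ρ' :=
        (sat_bigAnd M ρ' _).1 hE _ (List.mem_map.2 ⟨i, List.mem_finRange i, rfl⟩)
      have hcongr : (ts i).eval M ρ = (ts i).eval M ρ' := by
        apply Tm.eval_congr
        intro n hn
        refine (hρ' n ?_).symm
        intro hmem
        rcases (hLmem n).1 hmem with ⟨v, _, rfl⟩
        have := htsN i _ hn
        omega
      calc (ts i).eval M ρ = (ts i).eval M ρ' := hcongr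
        _ = ((r.conclArgs i).subst σ).eval M ρ' := hEi
        _ = (r.conclArgs i).eval M fun n => ρ' (n + N) := hsub _
  · rintro ⟨τ, hord, hind, heq⟩
    classical
    refine ⟨fun m => if m ∈ (r.vars.sort (· ≤ ·)).map (· + N) then τ (m - N) else ρ m,
      fun n hn => if_neg hn, ?_⟩
    set ρ' : ℕ → M.U :=
      fun m => if m ∈ (r.vars.sort (· ≤ ·)).map (· + N) then τ (m - N) else ρ m with hρ'def
    have hagree : ∀ n ∈ r.vars, ρ' (n + N) = τ n := by
      intro n hn
      have hm : n + N ∈ (r.vars.sort (· ≤ ·)).map (· + N) := (hLmem _).2 ⟨n, hn, rfl⟩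
      rw [hρ'def]
      simp only [hm, if_pos, Nat.add_sub_cancel]
    have hsub : ∀ t : Tm S, t.fv ⊆ r.vars → (t.subst σ).eval M ρ' = t.eval M τ := by
      intro t ht
      rw [Tm.eval_subst]
      exact Tm.eval_congr M t fun n hn => hagree n (ht hn)
    have hts : ∀ i : Fin (S.arI r.concl), (ts i).eval M ρ' = (ts i).eval M ρ := by
      intro i
      apply Tm.eval_congr
      intro n hn
      have h2 : n ∉ (r.vars.sort (· ≤ ·)).map (· + N) := by
        intro hmem
        rcases (hLmem n).1 hmem with ⟨v, _, rfl⟩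
        have := htsN i _ hn
        omega
      rw [hρ'def]
      simp [h2]
    refine ⟨?_, ?_, ?_⟩
    · rw [sat_bigAnd]
      intro A hA
      rcases List.mem_map.1 hA with ⟨i, _, rfl⟩
      show (ts i).eval M ρ' = ((r.conclArgs i).subst σ).eval M ρ'
      rw [hts i, hsub _ (conclArgs_fv_subset r i)]
      exact congrFun heq i
    · rw [sat_bigAnd]
      intro A hA
      rcases List.mem_map.1 hA with ⟨q, hq, rfl⟩
      show (fun i => ((q.2 i).subst σ).eval M ρ') ∈ M.interpP q.1
      have h2 : (fun i => ((q.2 i).subst σ).eval M ρ') = fun i => (q.2 i).eval M τ :=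
        funext fun i => hsub _ (ordPrems_fv_subset r q hq i)
      rw [h2]
      exact hord q hq
    · rw [sat_bigAnd]
      intro A hA
      rcases List.mem_map.1 hA with ⟨p, hp, rfl⟩
      rw [IH]
      have h2 : (fun i => ((p.2 i).subst σ).eval M ρ') = fun i => (p.2 i).eval M τ :=
        funext fun i => hsub _ (indPrems_fv_subset r p hp i)
      rw [h2]
      exact hind p hp

/-- Correctness of the syntactic unfolding: `P^{(k)}(t⃗)` holds iff the evaluated
arguments lie in the `k`-th iterate of the step operator. -/
theorem unfold_correct {S : Signature} [DecidableEq S.IndPred] (Φ : List (ProdRule S))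
    (M : Struc S) :
    ∀ (k : ℕ) (P : S.IndPred) (ts : Fin (S.arI P) → Tm S) (ρ : ℕ → M.U),
      Sat M ρ (unfold Φ k P ts) ↔
        (⟨P, fun i => (ts i).eval M ρ⟩ :
          (Q : S.IndPred) × (Fin (S.arI Q) → M.U)) ∈ (step M Φ)^[k] ∅
  | 0, P, ts, ρ => by
    simp [unfold, Sat]
  | (k + 1), P, ts, ρ => by
    have IH := unfold_correct Φ M k
    rw [Function.iterate_succ_apply']
    simp only [unfold]
    rw [sat_bigOr]
    constructor
    · rintro ⟨A, hA, hsat⟩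
      rcases List.mem_map.1 hA with ⟨r, hrΦ, rfl⟩
      by_cases hr : r.concl = P
      · subst hr
        rw [dif_pos rfl] at hsat
        rcases (sat_body Φ M k IH r ts ρ).1 hsat with ⟨τ, hord, hind, heq⟩
        exact ⟨r, hrΦ, τ, hord, hind, congrArg (fun f => (⟨r.concl, f⟩ : (Q : S.IndPred) × (Fin (S.arI Q) → M.U))) heq⟩
      · rw [dif_neg hr] at hsat
        exact hsat.elim
    · rintro ⟨r, hrΦ, τ, hord, hind, heq⟩
      have hfst : P = r.concl :=
        congrArg (fun v : (Q : S.IndPred) × (Fin (S.arI Q) → M.U) => v.1) heq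
      subst hfst
      have hsnd : (fun i => (ts i).eval M ρ) = fun i => (r.conclArgs i).eval M τ := by
        simpa using heq
      refine ⟨_, List.mem_map.2 ⟨r, hrΦ, rfl⟩, ?_⟩
      rw [dif_pos rfl]
      exact (sat_body Φ M k IH r ts ρ).2 ⟨τ, hord, hind, hsnd⟩

/-- an elementary substructure of a standard model for `(Σ, Φ)` is
itself a standard model for `(Σ, Φ)`.  Here `h : M'.U → M.U` realizes `M'` as an
elementary substructure of `M`: satisfaction of every formula is preserved and
reflected along `h`. -/
theorem stmt11 {S : Signature} (Φ : List (ProdRule S)) (M M' : Struc S)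
    [Nonempty M'.U] (h : M'.U → M.U)
    (helem : ∀ (A : Fm S) (ρ : ℕ → M'.U), Sat M' ρ A ↔ Sat M (h ∘ ρ) A)
    (hstd : Standard M Φ) : Standard M' Φ := by
  classical
  obtain ⟨d⟩ := ‹Nonempty M'.U›
  have hstd' : M.interpI = OrderHom.lfp (stepHom M Φ) := hstd
  show M'.interpI = OrderHom.lfp (stepHom M' Φ)
  ext v
  obtain ⟨P, a⟩ := v
  set ρ : ℕ → M'.U := fun n => if hn : n < S.arI P then a ⟨n, hn⟩ else d with hρ
  have hts : ∀ i : Fin (S.arI P), ρ (i : ℕ) = a i := by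
    intro i
    rw [hρ]
    simp [i.isLt]
  have e1 : (fun i : Fin (S.arI P) => (Tm.var (i : ℕ)).eval M' ρ) = a := funext hts
  have e2 : (fun i : Fin (S.arI P) => (Tm.var (i : ℕ)).eval M (h ∘ ρ)) = h ∘ a :=
    funext fun i => congrArg h (hts i)
  have key : ∀ k : ℕ,
      ((⟨P, a⟩ : (Q : S.IndPred) × (Fin (S.arI Q) → M'.U)) ∈ (step M' Φ)^[k] ∅) ↔
      ((⟨P, h ∘ a⟩ : (Q : S.IndPred) × (Fin (S.arI Q) → M.U)) ∈ (step M Φ)^[k] ∅) := by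
    intro k
    have s1 := unfold_correct Φ M' k P (fun i => .var (i : ℕ)) ρ
    have s2 := unfold_correct Φ M k P (fun i => .var (i : ℕ)) (h ∘ ρ)
    rw [e1] at s1
    rw [e2] at s2
    exact s1.symm.trans ((helem _ ρ).trans s2)
  have hmem : ((⟨P, a⟩ : (Q : S.IndPred) × (Fin (S.arI Q) → M'.U)) ∈ M'.interpI) ↔
      (⟨P, h ∘ a⟩ : (Q : S.IndPred) × (Fin (S.arI Q) → M.U)) ∈ M.interpI := by
    have h1 := helem (.ind P fun i => .var (i : ℕ)) ρ
    simp only [Sat] at h1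
    rwa [show (fun i : Fin (S.arI P) => (Tm.var (i : ℕ)).eval M' ρ) = a from e1,
      show (fun i : Fin (S.arI P) => (Tm.var (i : ℕ)).eval M (h ∘ ρ)) = h ∘ a from e2] at h1
  rw [lfp_eq_iUnion M' Φ]
  simp only [Set.mem_iUnion]
  rw [hmem, hstd', lfp_eq_iUnion M Φ]
  simp only [Set.mem_iUnion]
  exact exists_congr fun k => (key k).symm
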